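/- arXiv:1910.03638 — 6 statements merged into one kernel-verified Lean document; each statement's English description precedes it below -/
import Mathlib

section
/- Let h : ℝᵈ → ℝ be convex and continuously differentiable and let g : ℝᵈ → ℝ be continuously differentiable. If L·h - g and L·h + g are both convex on ℝᵈ for some L > 0, then for all x, y ∈ ℝᵈ, |g(x) - g(y) - ⟨∇g(y), x - y⟩| ≤ L·D_h(x, y), where D_h(x,y) = h(x) - h(y) - ⟨∇h(y), x - y⟩. -/
lemma first_order {E : Type*} [NormedAddCommGroup E] [NormedSpace ℝ E]
    (f : E → ℝ) (hconv : ConvexOn ℝ Set.univ f) (hdiff : Differentiable ℝ f)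
    (x y : E) : f y + fderiv ℝ f y (x - y) ≤ f x := by
  set A : ℝ →ᵃ[ℝ] E := AffineMap.lineMap y x with hA
  have hcomp : ConvexOn ℝ Set.univ (f ∘ A) := by
    have := hconv.comp_affineMap A
    simpa using this
  have hderiv : ∀ t : ℝ, HasDerivAt (f ∘ A) (fderiv ℝ f (A t) (x - y)) t := by
    intro t
    have h1 : HasDerivAt (fun t : ℝ => A t) (x - y) t := by
      have h2 : HasDerivAt (fun t : ℝ => y + t • (x - y)) (x - y) t := by
        simpa using ((hasDerivAt_id t).smul_const (x - y)).const_add y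
      apply h2.congr_of_eventuallyEq
      filter_upwards with s
      simp [hA, AffineMap.lineMap_apply]
      module
    exact (hdiff (A t)).hasFDerivAt.comp_hasDerivAt t h1
  have hA0 : A (0:ℝ) = y := by simp [hA]
  have hslope := hcomp.le_slope_of_hasDerivAt (Set.mem_univ (0:ℝ)) (Set.mem_univ (1:ℝ))
    one_pos (hA0 ▸ hderiv 0)
  rw [slope_def_field] at hslope
  have hc0 : (f ∘ A) 0 = f y := by simp [hA]
  have hc1 : (f ∘ A) 1 = f x := by simp [hA]
  rw [hc0, hc1] at hslope
  rw [map_sub] at *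
  linarith

lemma grad_inner {E : Type*} [NormedAddCommGroup E] [InnerProductSpace ℝ E]
    [CompleteSpace E] (f : E → ℝ) (hdiff : Differentiable ℝ f) (y v : E) :
    (inner ℝ (gradient f y) v : ℝ) = fderiv ℝ f y v := by
  have := (hdiff y).hasGradientAt.hasFDerivAt.fderiv
  rw [this, InnerProductSpace.toDual_apply_apply]

/-- Extended Descent Lemma, forward direction. -/
theorem stmt1 {d : ℕ} (h g : EuclideanSpace ℝ (Fin d) → ℝ) (L : ℝ)
    (hconv : ConvexOn ℝ Set.univ h) (hC1 : ContDiff ℝ 1 h) (gC1 : ContDiff ℝ 1 g)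
    (hL : 0 < L)
    (hc1 : ConvexOn ℝ Set.univ (fun x => L * h x - g x))
    (hc2 : ConvexOn ℝ Set.univ (fun x => L * h x + g x)) :
    ∀ x y : EuclideanSpace ℝ (Fin d),
      |g x - g y - (inner ℝ (gradient g y) (x - y) : ℝ)| ≤
        L * (h x - h y - (inner ℝ (gradient h y) (x - y) : ℝ)) := by
  intro x y
  have hdh : Differentiable ℝ h := hC1.differentiable one_ne_zero
  have hdg : Differentiable ℝ g := gC1.differentiable one_ne_zero
  have hd1 : Differentiable ℝ (fun x => L * h x - g x) :=
    ((hdh.const_smul L).sub hdg)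
  have hd2 : Differentiable ℝ (fun x => L * h x + g x) :=
    ((hdh.const_smul L).add hdg)
  have hf1 : fderiv ℝ (fun x => L * h x - g x) y (x - y)
      = L * fderiv ℝ h y (x - y) - fderiv ℝ g y (x - y) := by
    rw [fderiv_fun_sub ((hdh y).const_mul L) (hdg y), fderiv_const_mul (hdh y)]
    simp
  have hf2 : fderiv ℝ (fun x => L * h x + g x) y (x - y)
      = L * fderiv ℝ h y (x - y) + fderiv ℝ g y (x - y) := by
    rw [fderiv_fun_add ((hdh y).const_mul L) (hdg y), fderiv_const_mul (hdh y)]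
    simp
  have k1 := first_order _ hc1 hd1 x y
  have k2 := first_order _ hc2 hd2 x y
  rw [hf1] at k1
  rw [hf2] at k2
  rw [grad_inner g hdg, grad_inner h hdh]
  rw [abs_le]
  constructor <;> [linarith; linarith]
end

section
/- Conversely, if for all x, y ∈ ℝᵈ we have |g(x) - g(y) - ⟨∇g(y), x - y⟩| ≤ L·D_h(x,y), then L·h - g and L·h + g are convex on ℝᵈ. -/
/-- A function with a global supporting "gradient" at every point is convex. -/
lemma convexOn_of_support {E : Type*} [NormedAddCommGroup E] [InnerProductSpace ℝ E]
    (f : E → ℝ) (v : E → E)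
    (H : ∀ x y : E, 0 ≤ f x - f y - (inner ℝ (v y) (x - y) : ℝ)) :
    ConvexOn ℝ Set.univ f := by
  refine ⟨convex_univ, fun x _ y _ a b ha hb hab => ?_⟩
  set z := a • x + b • y with hz
  have h1 := H x z
  have h2 := H y z
  have hzz : a • z + b • z = z := by rw [← add_smul, hab, one_smul]
  have key : a • (x - z) + b • (y - z) = 0 := by
    rw [smul_sub, smul_sub]
    rw [show a • x - a • z + (b • y - b • z) = (a • x + b • y) - (a • z + b • z) by abel,
      hzz, hz, sub_self]
  have hin : (inner ℝ (v z) (a • (x - z) + b • (y - z)) : ℝ) = 0 := by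
    rw [key, inner_zero_right]
  rw [inner_add_right, real_inner_smul_right, real_inner_smul_right] at hin
  simp only [smul_eq_mul]
  have hfz : a * f z + b * f z = f z := by rw [← add_mul, hab, one_mul]
  nlinarith [mul_le_mul_of_nonneg_left h1 ha, mul_le_mul_of_nonneg_left h2 hb]

/-- Extended Descent Lemma, converse direction. -/
theorem stmt2 {d : ℕ} (h g : EuclideanSpace ℝ (Fin d) → ℝ) (L : ℝ)
    (hconv : ConvexOn ℝ Set.univ h) (hC1 : ContDiff ℝ 1 h) (gC1 : ContDiff ℝ 1 g)
    (hL : 0 < L)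
    (hub : ∀ x y : EuclideanSpace ℝ (Fin d),
      |g x - g y - (inner ℝ (gradient g y) (x - y) : ℝ)| ≤
        L * (h x - h y - (inner ℝ (gradient h y) (x - y) : ℝ))) :
    ConvexOn ℝ Set.univ (fun x => L * h x - g x) ∧
      ConvexOn ℝ Set.univ (fun x => L * h x + g x) := by
  constructor
  · apply convexOn_of_support _ (fun y => L • gradient h y - gradient g y)
    intro x y
    have hb := abs_le.mp (hub x y)
    rw [inner_sub_left, real_inner_smul_left]
    linarith [hb.1, hb.2]
  · apply convexOn_of_support _ (fun y => L • gradient h y + gradient g y)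
    intro x y
    have hb := abs_le.mp (hub x y)
    rw [inner_add_left, real_inner_smul_left]
    linarith [hb.1, hb.2]
end

section
/- Let Q ∈ ℝ^{A×B}, t₀ > 0, t ≥ 0. Then min over X ∈ ℝ^{A×B} with ‖X‖_F ≤ t of ⟨Q, X⟩ + t₀‖X‖₁ equals -t‖S_{t₀}(-Q)‖_F, where S_{t₀} is the entrywise soft-thresholding operator S_θ(x) = max(|x| - θ, 0)·sgn(x). Moreover, if ‖S_{t₀}(-Q)‖_F ≠ 0 the minimizer is X* = t·S_{t₀}(-Q)/‖S_{t₀}(-Q)‖_F. -/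
/-- Frobenius norm of a real matrix. -/
noncomputable def frob {A B : ℕ} (Q : Matrix (Fin A) (Fin B) ℝ) : ℝ :=
  Real.sqrt (∑ i, ∑ j, (Q i j) ^ 2)

/-- Frobenius (trace) inner product of real matrices. -/
def mip {A B : ℕ} (Q X : Matrix (Fin A) (Fin B) ℝ) : ℝ :=
  ∑ i, ∑ j, Q i j * X i j

/-- Entrywise L1 norm of a matrix. -/
def l1 {A B : ℕ} (X : Matrix (Fin A) (Fin B) ℝ) : ℝ :=
  ∑ i, ∑ j, |X i j|

/-- Entrywise soft-thresholding operator `S_θ(x) = max(|x|-θ,0) sgn(x)`. -/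
noncomputable def soft (θ : ℝ) {A B : ℕ} (Q : Matrix (Fin A) (Fin B) ℝ) :
    Matrix (Fin A) (Fin B) ℝ :=
  fun i j => max (|Q i j| - θ) 0 * Real.sign (Q i j)

lemma soft_neg_entry (θ q : ℝ) (hθ : 0 < θ) :
    (max (|q| - θ) 0 * Real.sign (-q)) ^ 2 = (max (|q| - θ) 0) ^ 2 ∧
    |max (|q| - θ) 0 * Real.sign (-q)| = max (|q| - θ) 0 ∧
    q * (max (|q| - θ) 0 * Real.sign (-q)) + θ * (max (|q| - θ) 0) =
      -(max (|q| - θ) 0) ^ 2 := by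
  rcases le_or_gt (|q|) θ with h1 | h1
  · have hm : max (|q| - θ) 0 = 0 := max_eq_right (by linarith)
    simp [hm]
  · have hm : max (|q| - θ) 0 = |q| - θ := max_eq_left (by linarith)
    have hq : q ≠ 0 := by
      intro h; rw [h] at h1; simp at h1; linarith
    rcases hq.lt_or_gt with h | h
    · have hs : Real.sign (-q) = 1 := Real.sign_of_pos (by linarith)
      have ha : |q| = -q := abs_of_neg h
      rw [hm, hs, ha]
      refine ⟨by ring, ?_, by ring⟩
      rw [mul_one, abs_of_nonneg (by linarith)]
    · have hs : Real.sign (-q) = -1 := Real.sign_of_neg (by linarith)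
      have ha : |q| = q := abs_of_nonneg h.le
      rw [hm, hs, ha]
      refine ⟨by ring, ?_, by ring⟩
      rw [mul_neg_one, abs_neg, abs_of_nonneg (by linarith)]

/-- Minimization of `⟨Q,X⟩ + t₀‖X‖₁` over the Frobenius ball of radius `t`:
the minimum equals `-t‖S_{t₀}(-Q)‖_F`, attained (when `‖S_{t₀}(-Q)‖_F ≠ 0`) at
`X* = t S_{t₀}(-Q)/‖S_{t₀}(-Q)‖_F`. -/
theorem stmt5 {A B : ℕ} (Q : Matrix (Fin A) (Fin B) ℝ)
    (t₀ : ℝ) (ht₀ : 0 < t₀) (t : ℝ) (ht : 0 ≤ t) :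
    (∀ X : Matrix (Fin A) (Fin B) ℝ, frob X ≤ t →
      -t * frob (soft t₀ (-Q)) ≤ mip Q X + t₀ * l1 X) ∧
    (frob (soft t₀ (-Q)) ≠ 0 →
      frob ((t / frob (soft t₀ (-Q))) • soft t₀ (-Q)) ≤ t ∧
      mip Q ((t / frob (soft t₀ (-Q))) • soft t₀ (-Q)) +
          t₀ * l1 ((t / frob (soft t₀ (-Q))) • soft t₀ (-Q)) =
        -t * frob (soft t₀ (-Q))) := by
  set S := soft t₀ (-Q) with hS
  have hSdef : ∀ i j, S i j = max (|Q i j| - t₀) 0 * Real.sign (-(Q i j)) := by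
    intro i j; simp [hS, soft, Matrix.neg_apply]
  have hkey : ∀ i j,
      (S i j) ^ 2 = (max (|Q i j| - t₀) 0) ^ 2 ∧
      |S i j| = max (|Q i j| - t₀) 0 ∧
      Q i j * S i j + t₀ * (max (|Q i j| - t₀) 0) = -(max (|Q i j| - t₀) 0) ^ 2 := by
    intro i j; rw [hSdef i j]; exact soft_neg_entry t₀ (Q i j) ht₀
  -- sum of squares of S
  have hsum_sq : ∀ (X : Matrix (Fin A) (Fin B) ℝ), ∑ i, ∑ j, (X i j) ^ 2 =
      ∑ p : Fin A × Fin B, (X p.1 p.2) ^ 2 := fun X => (Fintype.sum_prod_type (f := fun p => (X p.1 p.2) ^ 2)).symm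
  have hfrob_nonneg : ∀ (X : Matrix (Fin A) (Fin B) ℝ), 0 ≤ frob X := by
    intro X; exact Real.sqrt_nonneg _
  have hfrob_sq : (frob S) ^ 2 = ∑ i, ∑ j, (S i j) ^ 2 := by
    apply Real.sq_sqrt
    apply Finset.sum_nonneg; intro i _; apply Finset.sum_nonneg; intro j _; positivity
  constructor
  · intro X hX
    -- lower bound
    have h1 : ∑ p : Fin A × Fin B, |S p.1 p.2| * |X p.1 p.2| ≤ frob S * frob X := by
      have := Real.sum_mul_le_sqrt_mul_sqrt Finset.univ
        (fun p : Fin A × Fin B => |S p.1 p.2|) (fun p => |X p.1 p.2|)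
      simpa [frob, hsum_sq, sq_abs] using this
    have h2 : frob S * frob X ≤ frob S * t := by
      exact mul_le_mul_of_nonneg_left hX (hfrob_nonneg S)
    have h3 : -(frob S * t) ≤ mip Q X + t₀ * l1 X := by
      have hpt : ∀ i j, -(|S i j| * |X i j|) ≤ Q i j * X i j + t₀ * |X i j| := by
        intro i j
        have h := (hkey i j).2.1
        rw [h]
        have habs : -(|Q i j| * |X i j|) ≤ Q i j * X i j := by
          rw [← abs_mul]; exact neg_abs_le _
        nlinarith [abs_nonneg (X i j), le_max_left (|Q i j| - t₀) 0,
          le_max_right (|Q i j| - t₀) 0,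
          mul_le_mul_of_nonneg_right (le_max_left (|Q i j| - t₀) 0) (abs_nonneg (X i j))]
      calc -(frob S * t) ≤ -(∑ p : Fin A × Fin B, |S p.1 p.2| * |X p.1 p.2|) := by
            linarith [h1.trans h2]
        _ = ∑ i, ∑ j, -(|S i j| * |X i j|) := by
            rw [← Finset.sum_neg_distrib, Fintype.sum_prod_type]
        _ ≤ ∑ i, ∑ j, (Q i j * X i j + t₀ * |X i j|) := by
            apply Finset.sum_le_sum; intro i _; apply Finset.sum_le_sum; intro j _
            exact hpt i j
        _ = mip Q X + t₀ * l1 X := by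
            simp [mip, l1, Finset.sum_add_distrib, Finset.mul_sum]
    linarith [h3]
  · intro hne
    have hpos : 0 < frob S := lt_of_le_of_ne (hfrob_nonneg S) (Ne.symm hne)
    set c := t / frob S with hc
    have hcnn : 0 ≤ c := div_nonneg ht hpos.le
    have hfs : frob (c • S) = c * frob S := by
      unfold frob
      have : ∀ i j, ((c • S) i j) ^ 2 = c ^ 2 * (S i j) ^ 2 := by
        intro i j; simp [Matrix.smul_apply, mul_pow, smul_eq_mul]
      simp_rw [this, ← Finset.mul_sum]
      rw [Real.sqrt_mul (by positivity), Real.sqrt_sq hcnn]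
    constructor
    · rw [hfs, hc, div_mul_cancel₀ _ hne]
    · have hmip : mip Q (c • S) = c * mip Q S := by
        simp only [mip, Matrix.smul_apply, smul_eq_mul, Finset.mul_sum]
        exact Finset.sum_congr rfl fun i _ => Finset.sum_congr rfl fun j _ => by ring
      have hl1 : l1 (c • S) = c * l1 S := by
        simp [l1, Matrix.smul_apply, smul_eq_mul, abs_mul, abs_of_nonneg hcnn,
          Finset.mul_sum]
      have hmain : mip Q S + t₀ * l1 S = -(frob S) ^ 2 := by
        have hl1S : l1 S = ∑ i, ∑ j, max (|Q i j| - t₀) 0 := by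
          unfold l1; congr 1; funext i; congr 1; funext j; exact (hkey i j).2.1
        rw [hfrob_sq, mip, hl1S]
        rw [Finset.mul_sum, ← Finset.sum_add_distrib, ← Finset.sum_neg_distrib]
        apply Finset.sum_congr rfl; intro i _
        rw [Finset.mul_sum, ← Finset.sum_add_distrib, ← Finset.sum_neg_distrib]
        apply Finset.sum_congr rfl; intro j _
        rw [(hkey i j).2.2, (hkey i j).1]
      rw [hmip, hl1, mul_comm t₀ (c * l1 S), mul_assoc, mul_comm (l1 S) t₀,
        ← mul_add, hmain, hc]
      field_simp
end

section
/- Let H₃(W) = ((‖W‖² + 1)/(N+1))^{(N+1)/2} on ℝᵈ for an odd integer N ≥ 3. Then for all W, H ∈ ℝᵈ: (1/(N+1)^{(N-1)/2}) ‖H‖² (‖W‖² + 1)^{(N-1)/2} ≤ ⟨H, ∇²H₃(W) H⟩ ≤ (N/(N+1)^{(N-1)/2}) ‖H‖² (‖W‖² + 1)^{(N-1)/2}. -/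
open scoped RealInnerProductSpace

set_option maxHeartbeats 1000000 in
/-- Two-sided Hessian bounds for `H₃(W) = ((‖W‖²+1)/(N+1))^{(N+1)/2}`, `N ≥ 3` odd. -/
theorem stmt12 {d : ℕ} (N : ℕ) (hNo : Odd N) (hN : 3 ≤ N)
    (H₃ : EuclideanSpace ℝ (Fin d) → ℝ)
    (hH₃ : H₃ = fun W => ((‖W‖ ^ 2 + 1) / ((N : ℝ) + 1)) ^ ((N + 1) / 2)) :
    ∀ W H : EuclideanSpace ℝ (Fin d),
      (1 / ((N : ℝ) + 1) ^ ((N - 1) / 2)) * ‖H‖ ^ 2 * (‖W‖ ^ 2 + 1) ^ ((N - 1) / 2) ≤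
          fderiv ℝ (fderiv ℝ H₃) W H H ∧
        fderiv ℝ (fderiv ℝ H₃) W H H ≤
          ((N : ℝ) / ((N : ℝ) + 1) ^ ((N - 1) / 2)) * ‖H‖ ^ 2 * (‖W‖ ^ 2 + 1) ^ ((N - 1) / 2) := by
  obtain ⟨j, hj⟩ := hNo
  have hj1 : 1 ≤ j := by omega
  have hNk : (N - 1) / 2 = j := by omega
  have hNm : (N + 1) / 2 = j + 1 := by omega
  set c : ℝ := (N : ℝ) + 1 with hcdef
  have hc : 0 < c := by positivity
  -- the first derivative
  set s : EuclideanSpace ℝ (Fin d) → ℝ := fun w => ((j : ℝ) + 1) * ((‖w‖ ^ 2 + 1) / c) ^ j * (1 / c) with hs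
  set F : EuclideanSpace ℝ (Fin d) → (EuclideanSpace ℝ (Fin d) →L[ℝ] ℝ) := fun w => s w • (2 • innerSL ℝ w) with hF
  have hq : ∀ w : EuclideanSpace ℝ (Fin d), HasFDerivAt (fun w : EuclideanSpace ℝ (Fin d) => ‖w‖ ^ 2 + 1) (2 • innerSL ℝ w) w := fun w =>
    ((hasStrictFDerivAt_norm_sq w).hasFDerivAt).add_const 1
  have psider : ∀ t : ℝ, HasDerivAt (fun t : ℝ => (t / c) ^ (j + 1))
      (((j : ℝ) + 1) * (t / c) ^ j * (1 / c)) t := by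
    intro t
    have := (((hasDerivAt_id t).div_const c).pow (j + 1))
    simpa [Pi.pow_def] using this
  have hder : ∀ w, HasFDerivAt H₃ (F w) w := by
    intro w
    rw [hH₃, hNm]
    have := (psider (‖w‖ ^ 2 + 1)).comp_hasFDerivAt w (hq w)
    simpa [hF, hs, Function.comp_def] using this
  have hfd : fderiv ℝ H₃ = F := funext fun w => (hder w).fderiv
  intro W H
  set g : ℝ := ‖W‖ ^ 2 + 1 with hg
  have hg0 : 0 < g := by positivity
  -- derivative of s
  have hsder : HasFDerivAt s
      ((((j : ℝ) + 1) * ((j : ℝ) * (g / c) ^ (j - 1) * (1 / c)) * (1 / c)) • (2 • innerSL ℝ W)) W := by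
    have hpsi2 : HasDerivAt (fun t : ℝ => ((j : ℝ) + 1) * (t / c) ^ j * (1 / c))
        (((j : ℝ) + 1) * ((j : ℝ) * (g / c) ^ (j - 1) * (1 / c)) * (1 / c)) g := by
      have := ((((hasDerivAt_id g).div_const c).pow j).const_mul ((j : ℝ) + 1)).mul_const (1 / c)
      simpa [mul_assoc, mul_comm, mul_left_comm] using this
    exact hpsi2.comp_hasFDerivAt W (hq W)
  -- F is differentiable, so fderiv of fderiv applies
  have hFdiff : DifferentiableAt ℝ F W :=
    (hsder.differentiableAt).smul (((innerSL ℝ (E := EuclideanSpace ℝ (Fin d))).differentiableAt).const_smul (2:ℕ))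
  -- φ w = F w H as a scalar function
  set a : ℝ := ⟪W, H⟫ with ha
  set φ : EuclideanSpace ℝ (Fin d) → ℝ := fun w => s w * (2 * (innerSL ℝ H) w) with hφ
  have hφeq : (fun w => F w H) = φ := by
    funext w
    simp only [hF, hφ, ContinuousLinearMap.smul_apply, innerSL_apply_apply, smul_eq_mul,
      nsmul_eq_mul, Nat.cast_ofNat]
    rw [real_inner_comm w H]
  set S : ℝ := s W * (2 * ‖H‖ ^ 2) +
      (2 * a) * ((((j : ℝ) + 1) * ((j : ℝ) * (g / c) ^ (j - 1) * (1 / c)) * (1 / c)) * (2 * a)) with hS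
  have hφder : HasFDerivAt φ
      (s W • ((2:ℝ) • innerSL ℝ H) +
        (2 * (innerSL ℝ H) W) • ((((j : ℝ) + 1) * ((j : ℝ) * (g / c) ^ (j - 1) * (1 / c)) * (1 / c)) • (2 • innerSL ℝ W))) W :=
    hsder.mul (((innerSL ℝ H).hasFDerivAt).const_mul 2)
  have key : fderiv ℝ (fderiv ℝ H₃) W H H = S := by
    have h1 : fderiv ℝ (fun y => (fderiv ℝ H₃ y) H) W =
        (fderiv ℝ H₃ W).comp (fderiv ℝ (fun _ : EuclideanSpace ℝ (Fin d) => H) W) + (fderiv ℝ (fderiv ℝ H₃) W).flip H := by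
      apply fderiv_clm_apply
      · rw [hfd]; exact hFdiff
      · exact differentiableAt_const H
    have h2 : fderiv ℝ (fun y => (fderiv ℝ H₃ y) H) W = fderiv ℝ φ W := by
      rw [hfd, hφeq]
    simp only [fderiv_fun_const, Pi.zero_apply, ContinuousLinearMap.comp_zero, zero_add] at h1
    have h3 : fderiv ℝ φ W H = S := by
      rw [hφder.fderiv]
      simp only [ContinuousLinearMap.add_apply, ContinuousLinearMap.smul_apply,
        innerSL_apply_apply, smul_eq_mul, nsmul_eq_mul, Nat.cast_ofNat]
      rw [hS, ha, real_inner_self_eq_norm_sq, real_inner_comm H W]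
    have := congrArg (fun L : EuclideanSpace ℝ (Fin d) →L[ℝ] ℝ => L H) h1
    simp only [ContinuousLinearMap.flip_apply] at this
    rw [h2] at this
    rw [← this, h3]
  rw [key, hNk]
  -- now the scalar inequalities
  have hcj : (0:ℝ) < c ^ j := by positivity
  have hSval : S = ‖H‖ ^ 2 * g ^ j / c ^ j + 2 * (j : ℝ) * a ^ 2 * g ^ (j - 1) / c ^ j := by
    have hgj : g ^ j = g ^ (j - 1) * g := by
      rw [← pow_succ]; congr 1; omega
    have hcjj : c ^ j = c ^ (j - 1) * c := by
      rw [← pow_succ]; congr 1; omega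
    have hcd : c = 2 * ((j:ℝ) + 1) := by rw [hcdef, hj]; push_cast; ring
    have hu : ((j:ℝ) + 1) ≠ 0 := by positivity
    have hq0 : (2 * ((j:ℝ) + 1)) ^ (j - 1) ≠ 0 := by positivity
    have hgq : ((0:ℝ)) < g ^ (j-1) := by positivity
    simp only [hS, hs]
    rw [div_pow, div_pow, hgj, hcjj, hcd]
    field_simp
  have hib : a ^ 2 ≤ g * ‖H‖ ^ 2 := by
    have h1 := abs_real_inner_le_norm W H
    have h2 : |a| ^ 2 ≤ (‖W‖ * ‖H‖) ^ 2 := by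
      apply pow_le_pow_left₀ (abs_nonneg a) h1
    rw [sq_abs] at h2
    nlinarith [norm_nonneg H, sq_nonneg ‖H‖]
  constructor
  · rw [hSval]
    have : (0:ℝ) ≤ 2 * (j : ℝ) * a ^ 2 * g ^ (j - 1) / c ^ j := by positivity
    have hle : 1 / c ^ j * ‖H‖ ^ 2 * g ^ j = ‖H‖ ^ 2 * g ^ j / c ^ j := by ring
    linarith
  · rw [hSval]
    have hgj : g ^ (j - 1) * g = g ^ j := by
      rw [← pow_succ]; congr 1; omega
    have hNval : (N : ℝ) = 2 * (j : ℝ) + 1 := by rw [hj]; push_cast; ring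
    have h2 : 2 * (j : ℝ) * a ^ 2 * g ^ (j - 1) ≤ 2 * (j : ℝ) * ‖H‖ ^ 2 * g ^ j := by
      have hg1 : (0:ℝ) ≤ g ^ (j - 1) := by positivity
      calc 2 * (j : ℝ) * a ^ 2 * g ^ (j - 1) ≤ 2 * (j : ℝ) * (g * ‖H‖ ^ 2) * g ^ (j - 1) := by
            apply mul_le_mul_of_nonneg_right _ hg1
            apply mul_le_mul_of_nonneg_left hib
            positivity
        _ = 2 * (j : ℝ) * ‖H‖ ^ 2 * (g ^ (j - 1) * g) := by ring
        _ = 2 * (j : ℝ) * ‖H‖ ^ 2 * g ^ j := by rw [hgj]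
    rw [hNval]
    rw [← add_div, div_le_iff₀ hcj]
    have : ((2 * (j:ℝ) + 1) / c ^ j * ‖H‖ ^ 2 * g ^ j) * c ^ j = (2 * (j:ℝ) + 1) * ‖H‖ ^ 2 * g ^ j := by
      field_simp
    rw [this]
    nlinarith [h2]
end

section
/- Let H₃(W) = ((‖W‖² + 1)/(N+1))^{(N+1)/2} on ℝᵈ, N ≥ 3 odd. Then H₃ is σ-strongly convex with σ = 1/(N+1)^{(N-1)/2}, i.e. W ↦ H₃(W) - (σ/2)‖W‖² is convex. -/
open Finset

lemma convexOn_finset_sum {E : Type*} [AddCommGroup E] [Module ℝ E]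
    {ι : Type*} (s : Finset ι) (f : ι → E → ℝ)
    (h : ∀ i ∈ s, ConvexOn ℝ Set.univ (f i)) :
    ConvexOn ℝ Set.univ (fun x => ∑ i ∈ s, f i x) := by
  classical
  induction s using Finset.induction with
  | empty => simpa using convexOn_const 0 convex_univ
  | insert _ _ hx ih =>
    simp only [Finset.sum_insert hx]
    exact (h _ (Finset.mem_insert_self _ _)).add
      (ih fun i hi => h i (Finset.mem_insert_of_mem hi))

lemma convexOn_norm_pow {d : ℕ} (n : ℕ) :
    ConvexOn ℝ Set.univ (fun W : EuclideanSpace ℝ (Fin d) => ‖W‖ ^ n) := by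
  refine ⟨convex_univ, fun x _ y _ a b ha hb hab => ?_⟩
  have h1 : ‖a • x + b • y‖ ≤ a * ‖x‖ + b * ‖y‖ := by
    calc ‖a • x + b • y‖ ≤ ‖a • x‖ + ‖b • y‖ := norm_add_le _ _
      _ = a * ‖x‖ + b * ‖y‖ := by
        rw [norm_smul, norm_smul, Real.norm_eq_abs, Real.norm_eq_abs,
          abs_of_nonneg ha, abs_of_nonneg hb]
  calc ‖a • x + b • y‖ ^ n ≤ (a * ‖x‖ + b * ‖y‖) ^ n :=
        pow_le_pow_left₀ (norm_nonneg _) h1 n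
    _ = (a • ‖x‖ + b • ‖y‖) ^ n := by simp [smul_eq_mul]
    _ ≤ a • ‖x‖ ^ n + b • ‖y‖ ^ n :=
        (convexOn_pow n).2 (norm_nonneg x) (norm_nonneg y) ha hb hab
    _ = a * ‖x‖ ^ n + b * ‖y‖ ^ n := by simp [smul_eq_mul]

/-- `H₃(W) = ((‖W‖²+1)/(N+1))^{(N+1)/2}` is `σ`-strongly convex with
`σ = 1/(N+1)^{(N-1)/2}`, i.e. `W ↦ H₃(W) - (σ/2)‖W‖²` is convex. -/
theorem stmt13 {d : ℕ} (N : ℕ) (hNo : Odd N) (hN : 3 ≤ N)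
    (H₃ : EuclideanSpace ℝ (Fin d) → ℝ)
    (hH₃ : H₃ = fun W => ((‖W‖ ^ 2 + 1) / ((N : ℝ) + 1)) ^ ((N + 1) / 2)) :
    ConvexOn ℝ Set.univ
      (fun W : EuclideanSpace ℝ (Fin d) =>
        H₃ W - ((1 / ((N : ℝ) + 1) ^ ((N - 1) / 2)) / 2) * ‖W‖ ^ 2) := by
  obtain ⟨k, hk⟩ := hNo
  subst hH₃
  have h1 : (N + 1) / 2 = k + 1 := by omega
  have h2 : (N - 1) / 2 = k := by omega
  have hNc : (N : ℝ) + 1 = 2 * ((k : ℝ) + 1) := by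
    subst hk; push_cast; ring
  set D : ℝ := (2 * ((k : ℝ) + 1)) ^ (k + 1) with hD
  have hb : (0:ℝ) < 2 * ((k : ℝ) + 1) := by positivity
  have hDpos : 0 < D := by positivity
  set c : ℕ → ℝ := fun j =>
    if j = 1 then 0 else ((k+1).choose j : ℝ) / D with hc
  have key : ∀ W : EuclideanSpace ℝ (Fin d),
      ((‖W‖ ^ 2 + 1) / ((N : ℝ) + 1)) ^ ((N + 1) / 2)
        - ((1 / ((N : ℝ) + 1) ^ ((N - 1) / 2)) / 2) * ‖W‖ ^ 2
      = ∑ j ∈ Finset.range (k + 2), c j * ‖W‖ ^ (2 * j) := by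
    intro W
    set t : ℝ := ‖W‖ ^ 2 with ht
    have hexp : (t + 1) ^ (k + 1)
        = ∑ j ∈ Finset.range (k + 2), ((k+1).choose j : ℝ) * t ^ j := by
      have := add_pow t 1 (k + 1)
      simpa [mul_comm] using this
    have hsplit : ∀ j ∈ Finset.range (k + 2),
        c j * ‖W‖ ^ (2 * j)
          = ((k+1).choose j : ℝ) / D * t ^ j
            - (if j = 1 then ((k : ℝ) + 1) / D * t else 0) := by
      intro j _
      rw [pow_mul, ← ht]
      by_cases h : j = 1
      · subst h
        simp [hc, Nat.choose_one_right]
      · simp [hc, h]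
    rw [Finset.sum_congr rfl hsplit, Finset.sum_sub_distrib,
      Finset.sum_ite_eq' (Finset.range (k + 2)) 1
        (fun _ => ((k : ℝ) + 1) / D * t)]
    have h1mem : (1 : ℕ) ∈ Finset.range (k + 2) := by
      simp
    rw [if_pos h1mem, h1, h2, hNc]
    have hsum : ∑ j ∈ Finset.range (k + 2), ((k+1).choose j : ℝ) / D * t ^ j
        = (t + 1) ^ (k + 1) / D := by
      rw [hexp, Finset.sum_div]
      exact Finset.sum_congr rfl fun j _ => by ring
    rw [hsum, div_pow, hD]
    have hbk : (0:ℝ) < (2 * ((k : ℝ) + 1)) ^ k := by positivity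
    field_simp
    ring
  have hfun : (fun W : EuclideanSpace ℝ (Fin d) =>
        (fun W => ((‖W‖ ^ 2 + 1) / ((N : ℝ) + 1)) ^ ((N + 1) / 2)) W
          - ((1 / ((N : ℝ) + 1) ^ ((N - 1) / 2)) / 2) * ‖W‖ ^ 2)
      = fun W => ∑ j ∈ Finset.range (k + 2), c j * ‖W‖ ^ (2 * j) :=
    funext fun W => key W
  rw [hfun]
  refine convexOn_finset_sum _ _ fun j _ => ?_
  have hcj : 0 ≤ c j := by
    rw [hc]
    by_cases h : j = 1 <;> [simp [h]; · simp [h]; positivity]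
  simpa [smul_eq_mul] using (convexOn_norm_pow (d := d) (2 * j)).smul hcj
end

section
/- Let h(W₁,W₂) = 3((‖W₁‖²_F + ‖W₂‖²_F)/2)² + ‖Y‖_F (‖W₁‖²_F + ‖W₂‖²_F)/2 for a fixed matrix Y. For points x^k, x^{k-1} in the product matrix space and y^k = x^k + γ(x^k - x^{k-1}) with γ ∈ [0,1], one has D_h(x^k, y^k) ≤ 9γ²(‖x^k‖² + ‖Y‖_F/18)‖x^k - x^{k-1}‖² + 6γ⁴‖x^k - x^{k-1}‖⁴, where ‖·‖ is the product Frobenius norm. -/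
attribute [local instance] Matrix.frobeniusNormedAddCommGroup Matrix.frobeniusNormedSpace

noncomputable def matIPS (m n : Type*) [Fintype m] [Fintype n] :
    InnerProductSpace ℝ (Matrix m n ℝ) :=
  { inner := fun A B => ∑ i, ∑ j, B i j * A i j
    norm_sq_eq_re_inner := fun A => by
      rw [Matrix.frobenius_norm_def, ← Real.rpow_natCast, ← Real.rpow_mul (by positivity)]
      norm_num
      simp only [Real.rpow_two, Real.norm_eq_abs, sq_abs, sq]
    conj_inner_symm := fun A B => by
      simp only [conj_trivial]
      exact Finset.sum_congr rfl fun i _ => Finset.sum_congr rfl fun j _ => mul_comm _ _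
    add_left := fun A B C => by
      simp only [Matrix.add_apply, mul_add, Finset.sum_add_distrib]
    smul_left := fun A B r => by
      simp only [Matrix.smul_apply, smul_eq_mul, conj_trivial, Finset.mul_sum]
      exact Finset.sum_congr rfl fun i _ => Finset.sum_congr rfl fun j _ => by ring }

attribute [local instance] matIPS

lemma key (γ Y t w u : ℝ) (hγ0 : 0 ≤ γ) (hγ1 : γ ≤ 1) (hY : 0 ≤ Y)
    (ht : 0 ≤ t) (hw : 0 ≤ w) (hu : u ^ 2 ≤ t * w) :
    3*(t/2)^2 + Y*(t/2) - (3*((t+2*γ*u+γ^2*w)/2)^2 + Y*((t+2*γ*u+γ^2*w)/2))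
      - (((3/2)*(t+2*γ*u+γ^2*w) + Y/2) * (2*(-(γ*u) - γ^2*w)))
      ≤ 9*γ^2*(t + Y/18)*w + 6*γ^4*w^2 := by
  nlinarith [sq_nonneg (γ*u + γ^2*w), sq_nonneg (γ*u - γ^2*w), sq_nonneg γ,
    mul_nonneg (mul_nonneg hγ0 hγ0) hw, mul_nonneg ht hw, sq_nonneg u,
    mul_le_mul_of_nonneg_left hu (mul_nonneg hγ0 hγ0)]

lemma cs_sum {E F : Type*} [NormedAddCommGroup E] [InnerProductSpace ℝ E]
    [NormedAddCommGroup F] [InnerProductSpace ℝ F] (x d : E) (y e : F) :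
    ((inner ℝ x d : ℝ) + (inner ℝ y e : ℝ)) ^ 2 ≤ (‖x‖^2 + ‖y‖^2) * (‖d‖^2 + ‖e‖^2) := by
  have h1 := abs_real_inner_le_norm x d
  have h2 := abs_real_inner_le_norm y e
  have s1 : ((inner ℝ x d : ℝ) + (inner ℝ y e : ℝ)) ^ 2 ≤ (|(inner ℝ x d : ℝ)| + |(inner ℝ y e : ℝ)|) ^ 2 := by
    rw [← sq_abs]
    exact pow_le_pow_left₀ (abs_nonneg _) (abs_add_le _ _) 2
  have s2 : (|(inner ℝ x d : ℝ)| + |(inner ℝ y e : ℝ)|) ^ 2 ≤ (‖x‖*‖d‖ + ‖y‖*‖e‖) ^ 2 :=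
    pow_le_pow_left₀ (by positivity) (add_le_add h1 h2) 2
  nlinarith [sq_nonneg (‖x‖*‖e‖ - ‖y‖*‖d‖)]

set_option maxHeartbeats 1000000 in
lemma bregman_main {E F : Type*} [NormedAddCommGroup E] [InnerProductSpace ℝ E]
    [NormedAddCommGroup F] [InnerProductSpace ℝ F] (Yn : ℝ) (hY : 0 ≤ Yn)
    (xk xk1 yk : E × F) (γ : ℝ) (hγ0 : 0 ≤ γ) (hγ1 : γ ≤ 1)
    (hyk : yk = xk + γ • (xk - xk1)) :
    (3 * ((‖xk.1‖ ^ 2 + ‖xk.2‖ ^ 2) / 2) ^ 2 + Yn * ((‖xk.1‖ ^ 2 + ‖xk.2‖ ^ 2) / 2)) -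
      (3 * ((‖yk.1‖ ^ 2 + ‖yk.2‖ ^ 2) / 2) ^ 2 + Yn * ((‖yk.1‖ ^ 2 + ‖yk.2‖ ^ 2) / 2)) -
      fderiv ℝ (fun p : E × F =>
        3 * ((‖p.1‖ ^ 2 + ‖p.2‖ ^ 2) / 2) ^ 2 + Yn * ((‖p.1‖ ^ 2 + ‖p.2‖ ^ 2) / 2)) yk (xk - yk) ≤
      9 * γ ^ 2 * ((‖xk.1‖ ^ 2 + ‖xk.2‖ ^ 2) + Yn / 18) * (‖(xk - xk1).1‖ ^ 2 + ‖(xk - xk1).2‖ ^ 2) +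
        6 * γ ^ 4 * ((‖(xk - xk1).1‖ ^ 2 + ‖(xk - xk1).2‖ ^ 2)) ^ 2 := by
  subst hyk
  set y : E × F := xk + γ • (xk - xk1) with hy
  set s₀ : ℝ := ‖y.1‖ ^ 2 + ‖y.2‖ ^ 2 with hs₀
  have e1 : HasFDerivAt (fun p : E × F => (inner ℝ p.1 p.1 : ℝ))
      ((fderivInnerCLM ℝ (y.1, y.1)).comp
        ((ContinuousLinearMap.fst ℝ E F).prod (ContinuousLinearMap.fst ℝ E F))) y :=
    (hasFDerivAt_fst).inner ℝ (hasFDerivAt_fst)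
  have e2 : HasFDerivAt (fun p : E × F => (inner ℝ p.2 p.2 : ℝ))
      ((fderivInnerCLM ℝ (y.2, y.2)).comp
        ((ContinuousLinearMap.snd ℝ E F).prod (ContinuousLinearMap.snd ℝ E F))) y :=
    (hasFDerivAt_snd).inner ℝ (hasFDerivAt_snd)
  have en : HasFDerivAt (fun p : E × F => ‖p.1‖ ^ 2 + ‖p.2‖ ^ 2)
      ((fderivInnerCLM ℝ (y.1, y.1)).comp
        ((ContinuousLinearMap.fst ℝ E F).prod (ContinuousLinearMap.fst ℝ E F)) +
       (fderivInnerCLM ℝ (y.2, y.2)).comp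
        ((ContinuousLinearMap.snd ℝ E F).prod (ContinuousLinearMap.snd ℝ E F))) y := by
    have e3 : HasFDerivAt (fun p : E × F => (inner ℝ p.1 p.1 : ℝ) + inner ℝ p.2 p.2) _ y := e1.add e2
    simpa only [real_inner_self_eq_norm_sq] using e3
  have hout : HasDerivAt (fun s : ℝ => 3 * (s / 2) ^ 2 + Yn * (s / 2))
      ((3 / 2) * s₀ + Yn / 2) s₀ := by
    have h1 := (((hasDerivAt_id s₀).div_const 2).pow 2).const_mul (3 : ℝ)
    have h2 := ((hasDerivAt_id s₀).div_const 2).const_mul Yn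
    have h3 : HasDerivAt (fun s : ℝ => 3 * (s / 2) ^ 2 + Yn * (s / 2)) _ s₀ := h1.add h2
    convert h3 using 1
    simp only [id_eq, pow_one]
    push_cast
    ring
  have hh : HasFDerivAt
      (fun p : E × F => 3 * ((‖p.1‖ ^ 2 + ‖p.2‖ ^ 2) / 2) ^ 2 +
        Yn * ((‖p.1‖ ^ 2 + ‖p.2‖ ^ 2) / 2))
      (((3 / 2) * s₀ + Yn / 2) •
        ((fderivInnerCLM ℝ (y.1, y.1)).comp
          ((ContinuousLinearMap.fst ℝ E F).prod (ContinuousLinearMap.fst ℝ E F)) +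
         (fderivInnerCLM ℝ (y.2, y.2)).comp
          ((ContinuousLinearMap.snd ℝ E F).prod (ContinuousLinearMap.snd ℝ E F)))) y :=
    by have := hout.comp_hasFDerivAt y en; exact this
  rw [hh.fderiv]
  simp only [ContinuousLinearMap.smul_apply, ContinuousLinearMap.add_apply,
    ContinuousLinearMap.comp_apply, ContinuousLinearMap.prod_apply,
    ContinuousLinearMap.coe_fst', ContinuousLinearMap.coe_snd', fderivInnerCLM_apply,
    smul_eq_mul]
  -- component computations
  have hD1 : (xk - xk1).1 = xk.1 - xk1.1 := rfl
  have hD2 : (xk - xk1).2 = xk.2 - xk1.2 := rfl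
  have hcomp1 : y.1 = xk.1 + γ • (xk.1 - xk1.1) := by
    simp [hy, Prod.fst_add, Prod.smul_fst, Prod.fst_sub]
  have hcomp2 : y.2 = xk.2 + γ • (xk.2 - xk1.2) := by
    simp [hy, Prod.snd_add, Prod.smul_snd, Prod.snd_sub]
  have hv1 : (xk - y).1 = -(γ • (xk.1 - xk1.1)) := by
    simp only [hy, Prod.fst_sub, Prod.fst_add, Prod.smul_fst]
    abel
  have hv2 : (xk - y).2 = -(γ • (xk.2 - xk1.2)) := by
    simp only [hy, Prod.snd_sub, Prod.snd_add, Prod.smul_snd]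
    abel
  have hn1 : ‖y.1‖ ^ 2 = ‖xk.1‖ ^ 2 + 2 * (γ * inner ℝ xk.1 (xk.1 - xk1.1)) +
      γ ^ 2 * ‖xk.1 - xk1.1‖ ^ 2 := by
    rw [hcomp1, norm_add_sq_real, real_inner_smul_right, norm_smul, mul_pow,
      Real.norm_eq_abs, sq_abs]
  have hn2 : ‖y.2‖ ^ 2 = ‖xk.2‖ ^ 2 + 2 * (γ * inner ℝ xk.2 (xk.2 - xk1.2)) +
      γ ^ 2 * ‖xk.2 - xk1.2‖ ^ 2 := by
    rw [hcomp2, norm_add_sq_real, real_inner_smul_right, norm_smul, mul_pow,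
      Real.norm_eq_abs, sq_abs]
  have hi1 : (inner ℝ y.1 (xk - y).1 : ℝ) =
      -(γ * ((inner ℝ xk.1 (xk.1 - xk1.1) : ℝ) + γ * ‖xk.1 - xk1.1‖ ^ 2)) := by
    rw [hcomp1, hv1, inner_neg_right, real_inner_smul_right, inner_add_left,
      real_inner_smul_left, real_inner_self_eq_norm_sq]
    try ring
  have hi2 : (inner ℝ y.2 (xk - y).2 : ℝ) =
      -(γ * ((inner ℝ xk.2 (xk.2 - xk1.2) : ℝ) + γ * ‖xk.2 - xk1.2‖ ^ 2)) := by
    rw [hcomp2, hv2, inner_neg_right, real_inner_smul_right, inner_add_left,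
      real_inner_smul_left, real_inner_self_eq_norm_sq]
    try ring
  have hi1' : (inner ℝ (xk - y).1 y.1 : ℝ) = inner ℝ y.1 (xk - y).1 := real_inner_comm _ _
  have hi2' : (inner ℝ (xk - y).2 y.2 : ℝ) = inner ℝ y.2 (xk - y).2 := real_inner_comm _ _
  rw [hs₀, hi1', hi2', hi1, hi2, hn1, hn2, hD1, hD2]
  have hcs : ((inner ℝ xk.1 (xk.1 - xk1.1) : ℝ) + (inner ℝ xk.2 (xk.2 - xk1.2) : ℝ)) ^ 2 ≤
      (‖xk.1‖ ^ 2 + ‖xk.2‖ ^ 2) * (‖xk.1 - xk1.1‖ ^ 2 + ‖xk.2 - xk1.2‖ ^ 2) :=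
    cs_sum _ _ _ _
  have hkey := key γ Yn (‖xk.1‖ ^ 2 + ‖xk.2‖ ^ 2) (‖xk.1 - xk1.1‖ ^ 2 + ‖xk.2 - xk1.2‖ ^ 2)
    ((inner ℝ xk.1 (xk.1 - xk1.1) : ℝ) + (inner ℝ xk.2 (xk.2 - xk1.2) : ℝ))
    hγ0 hγ1 hY (by positivity) (by positivity) hcs
  linarith [hkey]

/-- Bregman-distance bound for the matrix-factorization kernel
`h(W₁,W₂) = 3((‖W₁‖²_F+‖W₂‖²_F)/2)² + ‖Y‖_F (‖W₁‖²_F+‖W₂‖²_F)/2`: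
for `yᵏ = xᵏ + γ(xᵏ - xᵏ⁻¹)` with `γ ∈ [0,1]`,
`D_h(xᵏ, yᵏ) ≤ 9γ²(‖xᵏ‖² + ‖Y‖_F/18)‖xᵏ-xᵏ⁻¹‖² + 6γ⁴‖xᵏ-xᵏ⁻¹‖⁴`,
where `‖(W₁,W₂)‖² = ‖W₁‖²_F + ‖W₂‖²_F` is the product Frobenius norm. -/
theorem stmt19 {a b c e m n : ℕ}
    (Y : Matrix (Fin m) (Fin n) ℝ)
    (h : Matrix (Fin a) (Fin b) ℝ × Matrix (Fin c) (Fin e) ℝ → ℝ)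
    (hdef : h = fun p =>
      3 * ((‖p.1‖ ^ 2 + ‖p.2‖ ^ 2) / 2) ^ 2 + ‖Y‖ * ((‖p.1‖ ^ 2 + ‖p.2‖ ^ 2) / 2))
    (n2 : Matrix (Fin a) (Fin b) ℝ × Matrix (Fin c) (Fin e) ℝ → ℝ)
    (hn2 : n2 = fun p => ‖p.1‖ ^ 2 + ‖p.2‖ ^ 2)
    (xk xk1 yk : Matrix (Fin a) (Fin b) ℝ × Matrix (Fin c) (Fin e) ℝ)
    (γ : ℝ) (hγ0 : 0 ≤ γ) (hγ1 : γ ≤ 1)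
    (hyk : yk = xk + γ • (xk - xk1)) :
    h xk - h yk - fderiv ℝ h yk (xk - yk) ≤
      9 * γ ^ 2 * (n2 xk + ‖Y‖ / 18) * n2 (xk - xk1) +
        6 * γ ^ 4 * (n2 (xk - xk1)) ^ 2 := by
  subst hdef hn2
  exact bregman_main ‖Y‖ (norm_nonneg Y) xk xk1 yk γ hγ0 hγ1 hyk
end
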